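/- arXiv:1801.06361 — 2 statements merged into one kernel-verified Lean document; each statement's English description precedes it below -/
import Mathlib

section
/- Let U be a Hilbert space, Q = Q₁ × Q₂ a product of Hilbert spaces with Q₁ ≠ {0}, and b(u,q) = b₁(u,q₁) + b₂(u,q₂) a continuous bilinear form on U × Q whose induced operator B : U → Q' is surjective. Let V₂ := ker(B₂) where B₂ : U → Q₂' is induced by b₂, and V := ker(B). Then the restriction B₁|_{V₂} : V₂ → Q₁' of the operator induced by b₁ is surjective; equivalently, there exists β > 0 such that inf_{q₁∈Q₁} sup_{u∈V₂} b₁(u,q₁)/(‖u‖_U ‖q₁‖_{Q₁}) ≥ β. -/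
open RealInnerProductSpace

noncomputable section

/-- `U, Q₁, Q₂` are real Hilbert spaces, `Q = Q₁ × Q₂` with `Q₁ ≠ {0}`;
`b₁, b₂` are continuous bilinear forms inducing operators `B₁ : U → Q₁'`, `B₂ : U → Q₂'`;
the combined operator `B = (B₁, B₂) : U → Q₁' × Q₂'` is surjective.  With
`V₂ := ker B₂`, the restriction `B₁|_{V₂} : V₂ → Q₁'` is surjective; equivalently there is
`β > 0` such that the inf-sup condition
`inf_{q₁∈Q₁} sup_{u∈V₂} b₁(u,q₁)/(‖u‖ ‖q₁‖) ≥ β` holds (the `sup` being expressed as the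
dual norm of the functional `v ↦ b₁(v, q₁)` on `V₂`). -/
theorem statement0
    {U Q1 Q2 : Type*}
    [NormedAddCommGroup U] [InnerProductSpace ℝ U] [CompleteSpace U]
    [NormedAddCommGroup Q1] [InnerProductSpace ℝ Q1] [CompleteSpace Q1]
    [NormedAddCommGroup Q2] [InnerProductSpace ℝ Q2] [CompleteSpace Q2]
    [Nontrivial Q1]
    (b1 : U →L[ℝ] Q1 →L[ℝ] ℝ) (b2 : U →L[ℝ] Q2 →L[ℝ] ℝ)
    (hBsurj : Function.Surjective
      (fun u : U => ((b1 u, b2 u) : (Q1 →L[ℝ] ℝ) × (Q2 →L[ℝ] ℝ)))) :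
    Function.Surjective ⇑(b1.comp (LinearMap.ker (b2 : U →ₗ[ℝ] Q2 →L[ℝ] ℝ)).subtypeL) ∧
      ∃ β > (0 : ℝ), ∀ q1 : Q1,
        β * ‖q1‖ ≤ ‖(b1.comp (LinearMap.ker (b2 : U →ₗ[ℝ] Q2 →L[ℝ] ℝ)).subtypeL).flip q1‖ := by
  haveI : CompleteSpace (LinearMap.ker (b2 : U →ₗ[ℝ] Q2 →L[ℝ] ℝ)) :=
    (ContinuousLinearMap.isClosed_ker b2).completeSpace_coe
  set T := b1.comp (LinearMap.ker (b2 : U →ₗ[ℝ] Q2 →L[ℝ] ℝ)).subtypeL with hT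
  have hsurj : Function.Surjective ⇑T := by
    intro f
    obtain ⟨u, hu⟩ := hBsurj (f, 0)
    have h1 : b1 u = f := congrArg Prod.fst hu
    have h2 : b2 u = 0 := congrArg Prod.snd hu
    exact ⟨⟨u, h2⟩, h1⟩
  refine ⟨hsurj, ?_⟩
  obtain ⟨C, hCpos, hC⟩ := T.exists_preimage_norm_le hsurj
  refine ⟨1 / C, by positivity, fun q1 => ?_⟩
  rcases eq_or_ne q1 0 with rfl | hq
  · simp
  obtain ⟨v, hv, hvn⟩ := hC ((InnerProductSpace.toDual ℝ Q1) q1)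
  have hq0 : (0 : ℝ) < ‖q1‖ := norm_pos_iff.mpr hq
  have hv0 : (0 : ℝ) < ‖v‖ := by
    rcases eq_or_lt_of_le (norm_nonneg v) with h0 | h
    · exfalso
      have : v = 0 := by simpa using h0.symm
      rw [this] at hv
      have := congrArg (fun f => f q1) hv
      simp [InnerProductSpace.toDual_apply_apply, real_inner_self_eq_norm_sq] at this
      exact hq (norm_eq_zero.mp (pow_eq_zero_iff two_ne_zero |>.mp this.symm))
    · exact h
  have key : ‖q1‖ ^ 2 = (T.flip q1) v := by
    have := congrArg (fun f => f q1) hv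
    simp only [InnerProductSpace.toDual_apply_apply, real_inner_self_eq_norm_sq] at this
    simpa [ContinuousLinearMap.flip_apply] using this.symm
  have hbound : ‖q1‖ ^ 2 ≤ ‖T.flip q1‖ * ‖v‖ := by
    calc ‖q1‖ ^ 2 = (T.flip q1) v := key
    _ ≤ ‖(T.flip q1) v‖ := le_abs_self _
    _ ≤ ‖T.flip q1‖ * ‖v‖ := (T.flip q1).le_opNorm v
  have hvC : ‖v‖ ≤ C * ‖q1‖ := by
    calc ‖v‖ ≤ C * ‖(InnerProductSpace.toDual ℝ Q1) q1‖ := hvn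
    _ = C * ‖q1‖ := by rw [LinearIsometryEquiv.norm_map]
  have : ‖q1‖ ^ 2 ≤ ‖T.flip q1‖ * (C * ‖q1‖) := by
    refine hbound.trans (mul_le_mul_of_nonneg_left hvC (norm_nonneg _))
  have h2 : ‖q1‖ * ‖q1‖ ≤ (‖T.flip q1‖ * C) * ‖q1‖ := by
    rw [mul_assoc, ← sq]; exact this
  rw [div_mul_eq_mul_div, div_le_iff₀ hCpos, one_mul]
  exact le_of_mul_le_mul_right h2 hq0
end
end

section
/- Let Ĥ be any separable Hilbert space and w ∈ H^{1,b}(I;Ĥ). The unique W ∈ P^b(I;Ĥ) satisfying D_Ĥ(W,X) = D_Ĥ(w,X) for all X ∈ P^b(I;Ĥ) is W = I_q w, the intervalwise projection of w. -/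
open MeasureTheory RealInnerProductSpace

noncomputable section

/-- Evaluation of the polynomial with coefficients `c` (degree `< q`) at `s`. -/
def pEval {E : Type*} [AddCommGroup E] [Module ℝ E] (q : ℕ) (c : ℕ → E) (s : ℝ) : E :=
  ∑ i ∈ Finset.range q, s ^ i • c i

/-- Derivative of the polynomial with coefficients `c` at `s`. -/
def pDeriv {E : Type*} [AddCommGroup E] [Module ℝ E] (q : ℕ) (c : ℕ → E) (s : ℝ) : E :=
  ∑ i ∈ Finset.range q, ((i : ℝ) * s ^ (i - 1)) • c i

/-- `c` is the family of coefficients of the DG projection `I_q φ`: on each subinterval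
`Iₙ = (tₙ₋₁, tₙ]` the value at the right endpoint coincides with that of `φ` and the moments
against polynomials of degree `≤ q − 2` vanish. -/
def IsProjCoeff {E : Type*} [NormedAddCommGroup E] [NormedSpace ℝ E]
    (q N : ℕ) (tp : ℕ → ℝ) (φ : ℝ → E) (c : ℕ → ℕ → E) : Prop :=
  ∀ n, 1 ≤ n → n ≤ N →
    pEval q (c n) (tp n) = φ (tp n) ∧
    ∀ i, i + 1 < q →
      (∫ s in Set.Ioc (tp (n - 1)) (tp n), s ^ i • (pEval q (c n) s - φ s)) = 0

section StatementFourHelpers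

variable {E : Type*} [NormedAddCommGroup E] [NormedSpace ℝ E]

lemma pEval_zero' (q : ℕ) (s : ℝ) : pEval q (0 : ℕ → E) s = 0 := by simp [pEval]

lemma continuous_pEval (q : ℕ) (c : ℕ → E) : Continuous (pEval q c) := by
  unfold pEval
  exact continuous_finset_sum _ fun i _ => (continuous_pow i).smul continuous_const

lemma continuous_pDeriv (q : ℕ) (c : ℕ → E) : Continuous (pDeriv q c) := by
  unfold pDeriv
  exact continuous_finset_sum _ fun i _ =>
    (continuous_const.mul (continuous_pow (i - 1))).smul continuous_const

lemma hasDerivAt_pEval (q : ℕ) (c : ℕ → E) (s : ℝ) :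
    HasDerivAt (fun t => pEval q c t) (pDeriv q c s) s := by
  unfold pEval pDeriv
  apply HasDerivAt.fun_sum
  intro i _
  simpa using (hasDerivAt_pow i s).smul_const (c i)

lemma pEval_smulCoeff (q : ℕ) (α : ℕ → ℝ) (e : E) (s : ℝ) :
    pEval q (fun j => α j • e) s = pEval q α s • e := by
  simp [pEval, Finset.sum_smul, smul_smul, smul_eq_mul]

lemma pDeriv_smulCoeff (q : ℕ) (α : ℕ → ℝ) (e : E) (s : ℝ) :
    pDeriv q (fun j => α j • e) s = pDeriv q α s • e := by
  simp [pDeriv, Finset.sum_smul, smul_smul, smul_eq_mul]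

lemma pEval_single (q k : ℕ) (hk : k < q) (r : ℝ) (s : ℝ) :
    pEval q (fun j => if j = k then r else 0) s = s ^ k * r := by
  unfold pEval
  rw [Finset.sum_eq_single_of_mem k (Finset.mem_range.mpr hk)]
  · simp [smul_eq_mul]
  · intro m _ hm; simp [hm]

lemma pEval_two (q k : ℕ) (hk : k + 1 < q) (r₁ r₀ s : ℝ) :
    pEval q (fun j => if j = k + 1 then r₁ else if j = 0 then r₀ else 0) s
      = s ^ (k + 1) * r₁ + r₀ := by
  unfold pEval
  rw [← Finset.sum_subset (s₁ := ({0, k + 1} : Finset ℕ))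
    (by
      intro x hx
      simp only [Finset.mem_insert, Finset.mem_singleton] at hx
      rcases hx with h | h <;> simp [h, Finset.mem_range] <;> omega)
    (by
      intro x hx hnx
      simp only [Finset.mem_insert, Finset.mem_singleton, not_or] at hnx
      simp [hnx.1, hnx.2])]
  rw [Finset.sum_insert (by simp)]
  simp [smul_eq_mul, Nat.succ_ne_zero]
  ring

lemma pDeriv_two (q k : ℕ) (hk : k + 1 < q) (r₁ r₀ s : ℝ) :
    pDeriv q (fun j => if j = k + 1 then r₁ else if j = 0 then r₀ else 0) s
      = (((k : ℝ) + 1) * s ^ k) * r₁ := by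
  unfold pDeriv
  rw [← Finset.sum_subset (s₁ := ({0, k + 1} : Finset ℕ))
    (by
      intro x hx
      simp only [Finset.mem_insert, Finset.mem_singleton] at hx
      rcases hx with h | h <;> simp [h, Finset.mem_range] <;> omega)
    (by
      intro x hx hnx
      simp only [Finset.mem_insert, Finset.mem_singleton, not_or] at hnx
      simp [hnx.1, hnx.2])]
  rw [Finset.sum_insert (by simp)]
  simp [smul_eq_mul, Nat.succ_ne_zero]

end StatementFourHelpers

section StatementFourAnalysis

variable {E : Type*} [NormedAddCommGroup E] [NormedSpace ℝ E] [CompleteSpace E]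

lemma integral_Ioc_deriv' {f f' : ℝ → E} {a b : ℝ} (hab : a ≤ b)
    (hd : ∀ s, HasDerivAt f (f' s) s) (hc : Continuous f') :
    ∫ s in Set.Ioc a b, f' s = f b - f a := by
  rw [← intervalIntegral.integral_of_le hab]
  exact intervalIntegral.integral_eq_sub_of_hasDerivAt (fun x _ => hd x)
    (hc.intervalIntegrable a b)

omit [CompleteSpace E] in
lemma integrableOn_smul_Ioc {g : ℝ → ℝ} (hg : Continuous g) {f : ℝ → E} {a b : ℝ}
    (hf : IntegrableOn f (Set.Ioc a b) volume) :
    IntegrableOn (fun s => g s • f s) (Set.Ioc a b) volume := by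
  obtain ⟨C, hC⟩ := (isCompact_Icc (a := a) (b := b)).exists_bound_of_continuousOn
    hg.continuousOn
  refine Integrable.mono' (hf.norm.const_mul C)
    (hg.aestronglyMeasurable.smul hf.aestronglyMeasurable) ?_
  filter_upwards [ae_restrict_mem measurableSet_Ioc] with s hs
  rw [norm_smul]
  exact mul_le_mul_of_nonneg_right (hC s (Set.Ioc_subset_Icc_self hs)) (norm_nonneg _)

lemma primitive_parts {f : ℝ → E} {a b : ℝ} (hab : a < b)
    (hf : IntegrableOn f (Set.Ioc a b) volume)
    {v v' : ℝ → ℝ} (hv : ∀ s, HasDerivAt v (v' s) s) (hv' : Continuous v') :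
    (∫ s in Set.Ioc a b, v' s • (∫ r in Set.Ioc a s, f r)) =
      ∫ r in Set.Ioc a b, (v b - v r) • f r := by
  haveI : Fact (volume (Set.Ioc a b) < ⊤) := ⟨measure_Ioc_lt_top⟩
  obtain ⟨C, hC⟩ := (isCompact_Icc (a := a) (b := b)).exists_bound_of_continuousOn
    hv'.continuousOn
  have hC0 : 0 ≤ C := le_trans (norm_nonneg _) (hC a ⟨le_rfl, hab.le⟩)
  have hmeas : MeasurableSet {p : ℝ × ℝ | p.2 ≤ p.1} :=
    measurableSet_le measurable_snd measurable_fst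
  have hFi : Integrable (Function.uncurry fun s r => (if r ≤ s then v' s else 0) • f r)
      ((volume.restrict (Set.Ioc a b)).prod (volume.restrict (Set.Ioc a b))) := by
    refine Integrable.mono' ((integrable_const C).mul_prod hf.norm) ?_ ?_
    · exact AEStronglyMeasurable.smul
        (Measurable.aestronglyMeasurable
          (Measurable.ite hmeas (hv'.measurable.comp measurable_fst) measurable_const))
        (hf.aestronglyMeasurable.comp_quasiMeasurePreserving
          Measure.quasiMeasurePreserving_snd)
    · have hproj : ∀ᵐ p ∂((volume.restrict (Set.Ioc a b)).prod
          (volume.restrict (Set.Ioc a b))), p.1 ∈ Set.Ioc a b := by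
        rw [Measure.prod_restrict]
        filter_upwards [ae_restrict_mem (measurableSet_Ioc.prod measurableSet_Ioc)] with p hp
        exact hp.1
      filter_upwards [hproj] with p hp
      rw [Function.uncurry_def, norm_smul]
      refine mul_le_mul_of_nonneg_right ?_ (norm_nonneg _)
      by_cases h : p.2 ≤ p.1
      · simpa [h] using hC p.1 (Set.Ioc_subset_Icc_self hp)
      · simp [h, hC0]
  have swap := MeasureTheory.integral_integral_swap hFi
  have hL : (∫ s, ∫ r, (if r ≤ s then v' s else 0) • f r
        ∂(volume.restrict (Set.Ioc a b)) ∂(volume.restrict (Set.Ioc a b)))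
      = ∫ s in Set.Ioc a b, v' s • (∫ r in Set.Ioc a s, f r) := by
    refine setIntegral_congr_fun measurableSet_Ioc fun s hs => ?_
    have h1 : (fun r => (if r ≤ s then v' s else 0) • f r)
        = (Set.Iic s).indicator (fun r => v' s • f r) := by
      funext r
      by_cases h : r ≤ s <;> simp [Set.indicator_apply, Set.mem_Iic, h]
    rw [h1, integral_indicator measurableSet_Iic,
      Measure.restrict_restrict measurableSet_Iic]
    have h2 : Set.Iic s ∩ Set.Ioc a b = Set.Ioc a s := by
      ext r
      simp only [Set.mem_inter_iff, Set.mem_Iic, Set.mem_Ioc]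
      exact ⟨fun ⟨h1', h2', _⟩ => ⟨h2', h1'⟩, fun ⟨h1', h2'⟩ => ⟨h2', h1', h2'.trans hs.2⟩⟩
    rw [h2, integral_smul]
  have hR : (∫ r, ∫ s, (if r ≤ s then v' s else 0) • f r
        ∂(volume.restrict (Set.Ioc a b)) ∂(volume.restrict (Set.Ioc a b)))
      = ∫ r in Set.Ioc a b, (v b - v r) • f r := by
    refine setIntegral_congr_fun measurableSet_Ioc fun r hr => ?_
    have h1 : (fun s => (if r ≤ s then v' s else 0) • f r)
        = fun s => (Set.Ici r).indicator v' s • f r := by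
      funext s
      by_cases h : r ≤ s <;> simp [Set.indicator_apply, Set.mem_Ici, h]
    rw [h1, integral_smul_const, integral_indicator measurableSet_Ici,
      Measure.restrict_restrict measurableSet_Ici]
    have h2 : Set.Ici r ∩ Set.Ioc a b = Set.Icc r b := by
      ext s
      simp only [Set.mem_inter_iff, Set.mem_Ici, Set.mem_Icc, Set.mem_Ioc]
      exact ⟨fun ⟨h1', _, h3'⟩ => ⟨h1', h3'⟩, fun ⟨h1', h2'⟩ => ⟨h1', hr.1.trans_le h1', h2'⟩⟩
    rw [h2, integral_Icc_eq_integral_Ioc, integral_Ioc_deriv' hr.2 hv hv']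
  rw [← hL, swap, hR]

end StatementFourAnalysis

section AuxInterval

variable {E : Type*} [NormedAddCommGroup E] [InnerProductSpace ℝ E] [CompleteSpace E]

lemma aux_interval (q : ℕ) (hq : 1 ≤ q) {a b : ℝ} (hab : a < b)
    {dw w : ℝ → E} (hdw : IntegrableOn dw (Set.Ioc a b) volume)
    (hwint : IntegrableOn w (Set.Ioc a b) volume)
    (wa : E)
    (hw : ∀ s ∈ Set.Ioc a b, w s = wa + ∫ r in Set.Ioc a s, dw r)
    (c : ℕ → E)
    (hkey : ∀ α : ℕ → ℝ,
      (∫ s in Set.Ioc a b, pEval q α s • pDeriv q c s)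
        + pEval q α a • (pEval q c a - wa)
      = ∫ r in Set.Ioc a b, pEval q α r • dw r) :
    pEval q c b = w b ∧
      ∀ i, i + 1 < q → (∫ s in Set.Ioc a b, s ^ i • (pEval q c s - w s)) = 0 := by
  have hwb : w b = wa + ∫ r in Set.Ioc a b, dw r := hw b ⟨hab, le_rfl⟩
  constructor
  · -- evaluation at the right endpoint
    have h := hkey (fun j => if j = 0 then 1 else 0)
    have e1 : ∀ s : ℝ, pEval q (fun j => if j = 0 then (1 : ℝ) else 0) s = 1 := fun s => by
      simpa using pEval_single q 0 hq 1 s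
    simp only [e1, one_smul] at h
    rw [integral_Ioc_deriv' hab.le (hasDerivAt_pEval q c) (continuous_pDeriv q c)] at h
    rw [hwb, ← h]
    abel
  · intro i hi
    -- the auxiliary scalar polynomial  α(s) = (s^(i+1) - b^(i+1))/(i+1)
    set v : ℝ → ℝ := fun s => s ^ (i + 1) * ((i : ℝ) + 1)⁻¹ with hv
    have hi1 : ((i : ℝ) + 1) ≠ 0 := by positivity
    have hvd : ∀ s, HasDerivAt v (s ^ i) s := by
      intro s
      have h := (hasDerivAt_pow (i + 1) s).mul_const (((i : ℝ) + 1)⁻¹)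
      simp only [Nat.add_sub_cancel, Nat.cast_add, Nat.cast_one] at h
      rw [mul_comm ((i:ℝ)+1), mul_inv_cancel_right₀ hi1] at h
      exact h
    set α : ℕ → ℝ :=
      fun j => if j = i + 1 then ((i : ℝ) + 1)⁻¹ else if j = 0 then -(v b) else 0 with hα
    have hαe : ∀ s, pEval q α s = v s - v b := by
      intro s
      rw [hα, pEval_two q i hi]
      simp [hv]
      ring
    have hαd : ∀ s, pDeriv q α s = s ^ i := by
      intro s
      rw [hα, pDeriv_two q i hi]
      field_simp
    have K2 := hkey α
    -- integrabilities
    have hPcInt : IntegrableOn (fun s => s ^ i • pEval q c s) (Set.Ioc a b) volume :=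
      ((continuous_pow i).smul (continuous_pEval q c)).integrableOn_Ioc
    have hwiInt : IntegrableOn (fun s => s ^ i • w s) (Set.Ioc a b) volume :=
      integrableOn_smul_Ioc (continuous_pow i) hwint
    -- FTC for the product α · polynomial
    have hftc : (∫ s in Set.Ioc a b,
          (pEval q α s • pDeriv q c s + pDeriv q α s • pEval q c s))
        = pEval q α b • pEval q c b - pEval q α a • pEval q c a := by
      apply integral_Ioc_deriv' hab.le
      · intro s
        exact (hasDerivAt_pEval q α s).smul (hasDerivAt_pEval q c s)
      · exact ((continuous_pEval q α).smul (continuous_pDeriv q c)).add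
          ((continuous_pDeriv q α).smul (continuous_pEval q c))
    rw [integral_add (f := fun s => pEval q α s • pDeriv q c s)
        (g := fun s => pDeriv q α s • pEval q c s)
        (((continuous_pEval q α).smul (continuous_pDeriv q c)).integrableOn_Ioc)
        (((continuous_pDeriv q α).smul (continuous_pEval q c)).integrableOn_Ioc)] at hftc
    have hsnd : (∫ s in Set.Ioc a b, pDeriv q α s • pEval q c s)
        = ∫ s in Set.Ioc a b, s ^ i • pEval q c s :=
      setIntegral_congr_fun measurableSet_Ioc fun s _ => by rw [hαd]
    have hαb : pEval q α b = 0 := by rw [hαe]; ring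
    -- rewrite the dw-side
    have hneg : (∫ r in Set.Ioc a b, pEval q α r • dw r)
        = -∫ r in Set.Ioc a b, (v b - v r) • dw r := by
      rw [← integral_neg]
      exact setIntegral_congr_fun measurableSet_Ioc fun r _ => by
        rw [hαe, ← neg_smul, neg_sub]
    -- decompose the w-integral
    have hwdecomp : (∫ s in Set.Ioc a b, s ^ i • w s)
        = (v b - v a) • wa + ∫ r in Set.Ioc a b, (v b - v r) • dw r := by
      have hcongr : Set.EqOn (fun s => s ^ i • w s)
          (fun s => s ^ i • wa + s ^ i • (∫ r in Set.Ioc a s, dw r)) (Set.Ioc a b) := by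
        intro s hs
        simp only
        rw [hw s hs, smul_add]
      have hprimInt : IntegrableOn (fun s => s ^ i • (∫ r in Set.Ioc a s, dw r))
          (Set.Ioc a b) volume := by
        apply IntegrableOn.congr_fun
          (hwiInt.sub (((continuous_pow i).smul continuous_const).integrableOn_Ioc
            (f := fun s => s ^ i • wa)))
          ?_ measurableSet_Ioc
        intro s hs
        simp only [Pi.sub_apply]
        rw [hw s hs, smul_add]
        abel
      rw [setIntegral_congr_fun measurableSet_Ioc hcongr,
        integral_add (((continuous_pow i).smul continuous_const).integrableOn_Ioc
          (f := fun s => s ^ i • wa)) hprimInt,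
        integral_smul_const,
        integral_Ioc_deriv' hab.le hvd (continuous_pow i),
        primitive_parts hab hdw hvd (continuous_pow i)]
    -- combine everything
    have hX : (∫ s in Set.Ioc a b, s ^ i • pEval q c s)
        = ∫ s in Set.Ioc a b, s ^ i • w s := by
      rw [hwdecomp]
      have hK : (pEval q α b • pEval q c b - pEval q α a • pEval q c a
            - (∫ s in Set.Ioc a b, s ^ i • pEval q c s))
          + pEval q α a • (pEval q c a - wa)
          = -∫ r in Set.Ioc a b, (v b - v r) • dw r := by
        rw [← hneg, ← K2, ← hsnd]
        rw [← hftc]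
        abel
      rw [hαb, zero_smul, smul_sub] at hK
      have hαa : pEval q α a = v a - v b := hαe a
      rw [hαa] at hK
      have : (∫ s in Set.Ioc a b, s ^ i • pEval q c s)
          = (v b - v a) • wa + ∫ r in Set.Ioc a b, (v b - v r) • dw r := by
        have h2 : -(∫ s in Set.Ioc a b, s ^ i • pEval q c s) - (v a - v b) • wa
            = -∫ r in Set.Ioc a b, (v b - v r) • dw r := by
          rw [← hK]; abel
        have h3 := congrArg Neg.neg h2
        simp only [neg_sub, neg_neg] at h3
        rw [show (v b - v a) = -(v a - v b) by ring, neg_smul]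
        rw [← h3]
        abel
      exact this
    rw [setIntegral_congr_fun measurableSet_Ioc
        (fun s _ => by simp only [smul_sub] : Set.EqOn (fun s : ℝ => s ^ i • (pEval q c s - w s))
          (fun s => s ^ i • pEval q c s - s ^ i • w s) (Set.Ioc a b)),
      integral_sub hPcInt hwiInt, hX, sub_self]

end AuxInterval

/-- Let `Ĥ = E` be a separable Hilbert space and `w ∈ H^{1,b}(I;Ĥ)` a broken `H¹` function
(represented by `w`, its intervalwise derivative `dw` and its right-limit node values `wp`).
If the broken polynomial `W ∈ P^b(I;Ĥ)` with coefficients `cW` satisfies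
`D_Ĥ(W, X) = D_Ĥ(w, X)` for all broken polynomials `X ∈ P^b(I;Ĥ)`, then `W = I_q w`. -/
theorem statement4
    {E : Type*} [NormedAddCommGroup E] [InnerProductSpace ℝ E] [CompleteSpace E]
    [TopologicalSpace.SeparableSpace E]
    (q N : ℕ) (hq : 1 ≤ q) (hN : 1 ≤ N)
    (tp : ℕ → ℝ) (htp : ∀ n < N, tp n < tp (n + 1))
    (w dw : ℝ → E) (wp : ℕ → E)
    (hw : ∀ n, 1 ≤ n → n ≤ N → ∀ s ∈ Set.Ioc (tp (n - 1)) (tp n),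
        w s = wp (n - 1) + ∫ r in (tp (n - 1))..s, dw r)
    (hwi : MemLp w 2 (volume.restrict (Set.Ioc (tp 0) (tp N))))
    (hdwi : MemLp dw 2 (volume.restrict (Set.Ioc (tp 0) (tp N))))
    (cW : ℕ → ℕ → E)
    (hW : ∀ cX : ℕ → ℕ → E,
      (∑ n ∈ Finset.Icc 1 N, ∫ s in Set.Ioc (tp (n - 1)) (tp n),
          ⟪pDeriv q (cW n) s, pEval q (cX n) s⟫)
        + (∑ n ∈ Finset.Icc 1 (N - 1),
            ⟪pEval q (cW (n + 1)) (tp n) - pEval q (cW n) (tp n),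
              pEval q (cX (n + 1)) (tp n)⟫)
        + ⟪pEval q (cW 1) (tp 0), pEval q (cX 1) (tp 0)⟫
      = (∑ n ∈ Finset.Icc 1 N, ∫ s in Set.Ioc (tp (n - 1)) (tp n),
          ⟪dw s, pEval q (cX n) s⟫)
        + (∑ n ∈ Finset.Icc 1 (N - 1),
            ⟪wp n - w (tp n), pEval q (cX (n + 1)) (tp n)⟫)
        + ⟪wp 0, pEval q (cX 1) (tp 0)⟫) :
    IsProjCoeff q N tp w cW := by
  -- monotonicity of the partition
  have tmono : ∀ j, j ≤ N → ∀ i, i ≤ j → tp i ≤ tp j := by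
    intro j
    induction j with
    | zero => intro _ i hi; rw [Nat.le_zero.mp hi]
    | succ k ih =>
      intro hk i hi
      by_cases h : i = k + 1
      · rw [h]
      · exact le_trans (ih (by omega) i (by omega)) (htp k (by omega)).le
  have hab : ∀ n, 1 ≤ n → n ≤ N → tp (n - 1) < tp n := by
    intro n h1 h2
    have := htp (n - 1) (by omega)
    rwa [show n - 1 + 1 = n by omega] at this
  have hsub : ∀ n, 1 ≤ n → n ≤ N →
      Set.Ioc (tp (n - 1)) (tp n) ⊆ Set.Ioc (tp 0) (tp N) := by
    intro n h1 h2
    exact Set.Ioc_subset_Ioc (tmono (n - 1) (by omega) 0 (by omega)) (tmono N le_rfl n h2)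
  have hdwInt : ∀ n, 1 ≤ n → n ≤ N →
      IntegrableOn dw (Set.Ioc (tp (n - 1)) (tp n)) volume := by
    intro n h1 h2
    haveI : Fact (volume (Set.Ioc (tp (n - 1)) (tp n)) < ⊤) := ⟨measure_Ioc_lt_top⟩
    exact (hdwi.mono_measure (Measure.restrict_mono (hsub n h1 h2) le_rfl)).integrable
      (by norm_num)
  have hwInt : ∀ n, 1 ≤ n → n ≤ N →
      IntegrableOn w (Set.Ioc (tp (n - 1)) (tp n)) volume := by
    intro n h1 h2
    haveI : Fact (volume (Set.Ioc (tp (n - 1)) (tp n)) < ⊤) := ⟨measure_Ioc_lt_top⟩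
    exact (hwi.mono_measure (Measure.restrict_mono (hsub n h1 h2) le_rfl)).integrable
      (by norm_num)
  have hw' : ∀ n, 1 ≤ n → n ≤ N → ∀ s ∈ Set.Ioc (tp (n - 1)) (tp n),
      w s = wp (n - 1) + ∫ r in Set.Ioc (tp (n - 1)) s, dw r := by
    intro n h1 h2 s hs
    rw [hw n h1 h2 s hs, intervalIntegral.integral_of_le hs.1.le]
  -- the key interval-local variational identity
  have key : ∀ n, 1 ≤ n → n ≤ N →
      (n = 1 ∨ (2 ≤ n ∧ pEval q (cW (n - 1)) (tp (n - 1)) = w (tp (n - 1)))) →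
      ∀ α : ℕ → ℝ,
        (∫ s in Set.Ioc (tp (n - 1)) (tp n), pEval q α s • pDeriv q (cW n) s)
          + pEval q α (tp (n - 1)) • (pEval q (cW n) (tp (n - 1)) - wp (n - 1))
        = ∫ r in Set.Ioc (tp (n - 1)) (tp n), pEval q α r • dw r := by
    intro n hn1 hnN hprev α
    apply ext_inner_right ℝ
    intro e
    have h := hW (fun m => if m = n then (fun j => α j • e) else 0)
    have hA : IntegrableOn (fun s => pEval q α s • pDeriv q (cW n) s)
        (Set.Ioc (tp (n - 1)) (tp n)) volume :=
      ((continuous_pEval q α).smul (continuous_pDeriv q (cW n))).integrableOn_Ioc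
    have hB : IntegrableOn (fun r => pEval q α r • dw r)
        (Set.Ioc (tp (n - 1)) (tp n)) volume :=
      integrableOn_smul_Ioc (continuous_pEval q α) (hdwInt n hn1 hnN)
    have H1 : (∑ m ∈ Finset.Icc 1 N, ∫ s in Set.Ioc (tp (m - 1)) (tp m),
          ⟪pDeriv q (cW m) s, pEval q (if m = n then (fun j => α j • e) else 0) s⟫)
        = ∫ s in Set.Ioc (tp (n - 1)) (tp n), ⟪e, pEval q α s • pDeriv q (cW n) s⟫ := by
      rw [Finset.sum_eq_single_of_mem n (Finset.mem_Icc.mpr ⟨hn1, hnN⟩)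
        (fun m _ hmn => by simp [if_neg hmn, pEval_zero'])]
      rw [if_pos rfl]
      refine setIntegral_congr_fun measurableSet_Ioc fun s _ => ?_
      rw [pEval_smulCoeff, real_inner_smul_right, real_inner_smul_right,
        real_inner_comm]
    have H1R : (∑ m ∈ Finset.Icc 1 N, ∫ s in Set.Ioc (tp (m - 1)) (tp m),
          ⟪dw s, pEval q (if m = n then (fun j => α j • e) else 0) s⟫)
        = ∫ r in Set.Ioc (tp (n - 1)) (tp n), ⟪e, pEval q α r • dw r⟫ := by
      rw [Finset.sum_eq_single_of_mem n (Finset.mem_Icc.mpr ⟨hn1, hnN⟩)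
        (fun m _ hmn => by simp [if_neg hmn, pEval_zero'])]
      rw [if_pos rfl]
      refine setIntegral_congr_fun measurableSet_Ioc fun s _ => ?_
      rw [pEval_smulCoeff, real_inner_smul_right, real_inner_smul_right,
        real_inner_comm]
    rw [inner_add_left,
      real_inner_comm e (∫ s in Set.Ioc (tp (n - 1)) (tp n),
        pEval q α s • pDeriv q (cW n) s), ← integral_inner hA e,
      real_inner_comm e (∫ r in Set.Ioc (tp (n - 1)) (tp n), pEval q α r • dw r),
      ← integral_inner hB e]
    rcases hprev with h1 | ⟨h2n, hprev⟩
    · -- first interval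
      subst h1
      have H2L : (∑ m ∈ Finset.Icc 1 (N - 1),
            ⟪pEval q (cW (m + 1)) (tp m) - pEval q (cW m) (tp m),
              pEval q (if m + 1 = 1 then (fun j => α j • e) else 0) (tp m)⟫) = 0 :=
        Finset.sum_eq_zero fun m hm => by
          have hm1 : m + 1 ≠ 1 := by have := (Finset.mem_Icc.mp hm).1; omega
          rw [if_neg hm1]
          simp [pEval_zero']
      have H2R : (∑ m ∈ Finset.Icc 1 (N - 1),
            ⟪wp m - w (tp m),
              pEval q (if m + 1 = 1 then (fun j => α j • e) else 0) (tp m)⟫) = 0 :=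
        Finset.sum_eq_zero fun m hm => by
          have hm1 : m + 1 ≠ 1 := by have := (Finset.mem_Icc.mp hm).1; omega
          rw [if_neg hm1]
          simp [pEval_zero']
      rw [H1, H1R, H2L, H2R, if_pos rfl] at h
      rw [pEval_smulCoeff, real_inner_smul_right, real_inner_smul_right] at h
      rw [real_inner_smul_left, inner_sub_left]
      simp only [Nat.sub_self] at h ⊢
      linarith [h]
    · -- later intervals: single jump term at m = n - 1
      have hmem : n - 1 ∈ Finset.Icc 1 (N - 1) := Finset.mem_Icc.mpr ⟨by omega, by omega⟩
      have hnn : n - 1 + 1 = n := by omega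
      have H2L : (∑ m ∈ Finset.Icc 1 (N - 1),
            ⟪pEval q (cW (m + 1)) (tp m) - pEval q (cW m) (tp m),
              pEval q (if m + 1 = n then (fun j => α j • e) else 0) (tp m)⟫)
          = ⟪pEval q (cW n) (tp (n - 1)) - pEval q (cW (n - 1)) (tp (n - 1)),
              pEval q α (tp (n - 1)) • e⟫ := by
        rw [Finset.sum_eq_single_of_mem (n - 1) hmem
          (fun m _ hmn => by
            have : m + 1 ≠ n := by omega
            simp [if_neg this, pEval_zero'])]
        rw [hnn, if_pos rfl, pEval_smulCoeff]
      have H2R : (∑ m ∈ Finset.Icc 1 (N - 1),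
            ⟪wp m - w (tp m),
              pEval q (if m + 1 = n then (fun j => α j • e) else 0) (tp m)⟫)
          = ⟪wp (n - 1) - w (tp (n - 1)), pEval q α (tp (n - 1)) • e⟫ := by
        rw [Finset.sum_eq_single_of_mem (n - 1) hmem
          (fun m _ hmn => by
            have : m + 1 ≠ n := by omega
            simp [if_neg this, pEval_zero'])]
        rw [hnn, if_pos rfl, pEval_smulCoeff]
      have h1n : (1 : ℕ) ≠ n := by omega
      rw [H1, H1R, H2L, H2R, if_neg h1n, pEval_zero'] at h
      rw [hprev] at h
      rw [real_inner_smul_left, inner_sub_left]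
      rw [real_inner_smul_right, real_inner_smul_right, inner_sub_left,
        inner_sub_left] at h
      simp only [inner_zero_right] at h
      linarith [h]
  -- apply the per-interval analysis
  have main : ∀ n, 1 ≤ n → n ≤ N →
      (n = 1 ∨ (2 ≤ n ∧ pEval q (cW (n - 1)) (tp (n - 1)) = w (tp (n - 1)))) →
      pEval q (cW n) (tp n) = w (tp n) ∧
        ∀ i, i + 1 < q →
          (∫ s in Set.Ioc (tp (n - 1)) (tp n), s ^ i • (pEval q (cW n) s - w s)) = 0 :=
    fun n h1 h2 hprev =>
      aux_interval q hq (hab n h1 h2) (hdwInt n h1 h2) (hwInt n h1 h2) (wp (n - 1))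
        (hw' n h1 h2) (cW n) (key n h1 h2 hprev)
  have evalAll : ∀ n, 1 ≤ n → n ≤ N → pEval q (cW n) (tp n) = w (tp n) := by
    intro n
    induction n with
    | zero => intro h; omega
    | succ k ih =>
      intro h1 h2
      rcases Nat.eq_zero_or_pos k with hk | hk
      · subst hk; exact (main 1 le_rfl h2 (Or.inl rfl)).1
      · have hprev := ih (by omega) (by omega)
        exact (main (k + 1) h1 h2 (Or.inr ⟨by omega,
          by simpa [Nat.add_sub_cancel] using hprev⟩)).1
  intro n h1 h2
  refine ⟨evalAll n h1 h2, ?_⟩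
  have hprev : n = 1 ∨ (2 ≤ n ∧ pEval q (cW (n - 1)) (tp (n - 1)) = w (tp (n - 1))) := by
    by_cases hone : n = 1
    · exact Or.inl hone
    · exact Or.inr ⟨by omega, evalAll (n - 1) (by omega) (by omega)⟩
  exact (main n h1 h2 hprev).2
end
end
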